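/- arXiv:2509.23079 — 2 statements merged into one kernel-verified Lean document; each statement's English description precedes it below -/
import Mathlib

section
/- Let F/ℚ be a finite separable extension and V a finite-dimensional F-vector space. If b : V × V → ℚ is a ℚ-bilinear symmetric form satisfying b(f·x, y) = b(x, f·y) for all f ∈ F and x, y ∈ V, then there exists a unique F-bilinear symmetric form B : V × V → F such that tr_{F/ℚ}(B(x,y)) = b(x,y) for all x, y ∈ V. -/
/-- Let `F/ℚ` be a finite (separable) extension and `V` a
finite-dimensional `F`-vector space.  If `b` is a symmetric `ℚ`-bilinear form on `V`
satisfying `b (f • x) y = b x (f • y)` for all `f ∈ F`, then there exists a unique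
symmetric `F`-bilinear form `B : V × V → F` with `tr_{F/ℚ} (B x y) = b x y`. -/
theorem exists_unique_F_bilinear_lift_of_trace
    (F : Type*) [Field F] [Algebra ℚ F] [FiniteDimensional ℚ F]
    (V : Type*) [AddCommGroup V] [Module ℚ V] [Module F V] [IsScalarTower ℚ F V]
    [FiniteDimensional F V]
    (b : V →ₗ[ℚ] V →ₗ[ℚ] ℚ)
    (hsymm : ∀ x y : V, b x y = b y x)
    (hadj : ∀ (f : F) (x y : V), b (f • x) y = b x (f • y)) :
    ∃! B : V →ₗ[F] V →ₗ[F] F,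
      (∀ x y : V, B x y = B y x) ∧
      (∀ x y : V, Algebra.trace ℚ F (B x y) = b x y) := by
  classical
  set T := (Algebra.traceForm ℚ F).toDual (traceForm_nondegenerate ℚ F) with hT
  -- injectivity criterion
  have hinj : ∀ f g : F, (∀ c : F, Algebra.trace ℚ F (f * c) = Algebra.trace ℚ F (g * c)) →
      f = g := by
    intro f g h
    apply T.injective
    ext c
    simpa [hT, LinearMap.BilinForm.toDual_def, Algebra.traceForm_apply] using h c
  -- the ℚ-linear functional c ↦ b (c • x) y
  have φlin : ∀ x y : V, ∃ φ : F →ₗ[ℚ] ℚ, ∀ c : F, φ c = b (c • x) y := by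
    intro x y
    refine ⟨{ toFun := fun c => b (c • x) y,
              map_add' := fun c d => by
                show b ((c + d) • x) y = b (c • x) y + b (d • x) y
                rw [add_smul, map_add, LinearMap.add_apply],
              map_smul' := fun q c => by
                show b ((q • c) • x) y = q • b (c • x) y
                rw [smul_assoc, map_smul, LinearMap.smul_apply] }, fun c => rfl⟩
  choose φ hφ using φlin
  set Bfun : V → V → F := fun x y => T.symm (φ x y) with hBfun
  have htr : ∀ (x y : V) (c : F), Algebra.trace ℚ F (Bfun x y * c) = b (c • x) y := by
    intro x y c
    have := (Algebra.traceForm ℚ F).apply_toDual_symm_apply (hB := traceForm_nondegenerate ℚ F) (φ x y) c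
    rw [Algebra.traceForm_apply] at this
    rw [hBfun]; simp only [hT] at this ⊢; rw [this, hφ]
  -- symmetry of Bfun
  have hBsymm : ∀ x y : V, Bfun x y = Bfun y x := by
    intro x y
    apply hinj
    intro c
    rw [htr, htr, hadj, hsymm]
  -- linearity properties via hinj
  have haddl : ∀ x x' y : V, Bfun (x + x') y = Bfun x y + Bfun x' y := by
    intro x x' y
    apply hinj; intro c
    rw [add_mul, map_add, htr, htr, htr, smul_add, map_add, LinearMap.add_apply]
  have hsmull : ∀ (f : F) (x y : V), Bfun (f • x) y = f * Bfun x y := by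
    intro f x y
    apply hinj; intro c
    rw [htr, mul_comm f (Bfun x y), mul_assoc, htr, mul_smul, smul_comm f c x]
  have haddr : ∀ x y y' : V, Bfun x (y + y') = Bfun x y + Bfun x y' := by
    intro x y y'
    rw [hBsymm, haddl, hBsymm y x, hBsymm y' x]
  have hsmulr : ∀ (f : F) (x y : V), Bfun x (f • y) = f * Bfun x y := by
    intro f x y
    rw [hBsymm, hsmull, hBsymm]
  refine ⟨{ toFun := fun x =>
            { toFun := fun y => Bfun x y,
              map_add' := haddr x,
              map_smul' := fun f y => by simpa [smul_eq_mul] using hsmulr f x y },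
            map_add' := fun x x' => by ext y; exact haddl x x' y,
            map_smul' := fun f x => by ext y; simpa [smul_eq_mul] using hsmull f x y },
         ⟨hBsymm, ?_⟩, ?_⟩
  · intro x y
    have := htr x y 1
    rwa [mul_one, one_smul] at this
  · rintro B' ⟨hB'symm, hB'tr⟩
    ext x y
    show B' x y = Bfun x y
    apply hinj; intro c
    rw [htr]
    have : B' x y * c = B' (c • x) y := by
      rw [LinearMap.map_smul₂, smul_eq_mul, mul_comm]
    rw [this, hB'tr]
end

section
/- Let K be a CM field. Then there exists an element t ∈ K such that K = ℚ(t) and t·ι(t) = 1, where ι is the complex conjugation involution of K. -/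
/-- Let `K` be a CM field (totally imaginary quadratic extension
of a totally real number field `F`) with complex-conjugation involution `ι`, the
nontrivial element of `Gal(K/F)`.  Then there exists `t ∈ K` with `K = ℚ(t)` and
`t * ι t = 1`. -/
theorem exists_primitive_element_of_norm_one
    (F K : Type*) [Field F] [NumberField F] [Field K] [NumberField K] [Algebra F K]
    (htotreal : ∀ (σ : F →+* ℂ) (x : F), (σ x).im = 0)
    (hrank : Module.finrank F K = 2)
    (htotimag : IsEmpty (K →+* ℝ))
    (ι : K ≃ₐ[F] K) (hne : ι ≠ AlgEquiv.refl) :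
    ∃ t : K, Algebra.adjoin ℚ {t} = ⊤ ∧ t * ι t = 1 := by
  classical
  have hFD : FiniteDimensional F K :=
    FiniteDimensional.of_finrank_pos (by rw [hrank]; norm_num)
  obtain ⟨α, hα⟩ := Field.exists_primitive_element ℚ K
  have hcast : ∀ q : ℚ, ι (q : K) = (q : K) := fun q => map_ratCast ι q
  have hint : ∀ x : K, IsIntegral ℚ x := fun x => IsIntegral.of_finite ℚ x
  have hadj : Algebra.adjoin ℚ {α} = ⊤ := by
    rw [← IntermediateField.adjoin_simple_toSubalgebra_of_isAlgebraic (hint α).isAlgebraic, hα,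
      IntermediateField.top_toSubalgebra]
  -- `ι α ≠ α`, else `ι = refl`
  have hαfix : ι α ≠ α := by
    intro h
    apply hne
    ext x
    have hx : x ∈ Algebra.adjoin ℚ {α} := hadj ▸ Algebra.mem_top
    simp only [AlgEquiv.coe_refl, id_eq]
    induction hx using Algebra.adjoin_induction with
    | mem y hy => rw [Set.mem_singleton_iff.mp hy]; exact h
    | algebraMap q => rw [show algebraMap ℚ K q = (q : K) from eq_ratCast _ q]; exact hcast q
    | add a b ha hb hha hhb => rw [map_add, hha, hhb]
    | mul a b ha hb hha hhb => rw [map_mul, hha, hhb]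
  -- `ι (ι α) = α` via roots of the minimal polynomial over `F`
  have hβα : ι (ι α) = α := by
    by_contra hne2
    have hιι : ι (ι α) ≠ ι α := fun h => hαfix (ι.injective h)
    set p := (minpoly F α).map (algebraMap F K) with hp
    have hp0 : minpoly F α ≠ 0 := minpoly.ne_zero (IsIntegral.of_finite F α)
    have hpm0 : p ≠ 0 := (Polynomial.map_ne_zero_iff (algebraMap F K).injective).mpr hp0
    have hroots : ∀ x : K, Polynomial.aeval x (minpoly F α) = 0 → x ∈ p.roots := by
      intro x hx
      rw [Polynomial.mem_roots hpm0]
      rwa [Polynomial.IsRoot, hp, Polynomial.eval_map, ← Polynomial.aeval_def]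
    have h1 : α ∈ p.roots := hroots α (minpoly.aeval F α)
    have h2 : ι α ∈ p.roots := hroots _ (by
      rw [Polynomial.aeval_algHom_apply ι α (minpoly F α), minpoly.aeval, map_zero])
    have h3 : ι (ι α) ∈ p.roots := hroots _ (by
      rw [Polynomial.aeval_algHom_apply ι (ι α) (minpoly F α),
        Polynomial.aeval_algHom_apply ι α (minpoly F α), minpoly.aeval, map_zero, map_zero])
    have hcard : p.roots.toFinset.card ≤ 2 := by
      calc p.roots.toFinset.card ≤ Multiset.card p.roots := p.roots.toFinset_card_le
        _ ≤ p.natDegree := p.card_roots'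
        _ = (minpoly F α).natDegree := Polynomial.natDegree_map _
        _ ≤ Module.finrank F K := minpoly.natDegree_le α
        _ = 2 := hrank
    have hsub : ({α, ι α, ι (ι α)} : Finset K) ⊆ p.roots.toFinset := by
      intro x hx
      simp only [Finset.mem_insert, Finset.mem_singleton] at hx
      rcases hx with h | h | h <;> subst h <;> rw [Multiset.mem_toFinset]
      · exact h1
      · exact h2
      · exact h3
    have hc3 : ({α, ι α, ι (ι α)} : Finset K).card = 3 := by
      rw [Finset.card_insert_of_notMem (by
          simp only [Finset.mem_insert, Finset.mem_singleton]
          push_neg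
          exact ⟨Ne.symm hαfix, fun h => hne2 h.symm⟩),
        Finset.card_insert_of_notMem (by
          simp only [Finset.mem_singleton]
          exact fun h => hιι h.symm),
        Finset.card_singleton]
    have := Finset.card_le_card hsub
    omega
  have hαq : ∀ q : ℚ, α ≠ (q : K) := by
    intro q h
    exact hαfix (by rw [h, hcast])
  have hβq : ∀ q : ℚ, ι α ≠ (q : K) := by
    intro q h
    exact hαq q (by rw [← hβα, h, hcast])
  by_contra hcon
  push_neg at hcon
  set t : ℚ → K := fun n => (α + n) / (ι α + n) with ht
  have hβn : ∀ n : ℚ, ι α + (n : K) ≠ 0 := by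
    intro n h
    exact hβq (-n) (by push_cast; linear_combination h)
  have hαn : ∀ n : ℚ, α + (n : K) ≠ 0 := by
    intro n h
    exact hαq (-n) (by push_cast; linear_combination h)
  have htι : ∀ n : ℚ, t n * ι (t n) = 1 := by
    intro n
    have hι : ι (t n) = (ι α + n) / (α + n) := by
      simp only [ht, map_div₀, map_add, hcast, hβα]
    rw [hι, ht]
    rw [div_mul_div_comm, mul_comm (α + (n : K))]
    exact div_self (mul_ne_zero (hβn n) (hαn n))
  have heq : ∀ n : ℚ, α + (n : K) = t n * (ι α + n) := fun n =>
    (div_mul_cancel₀ _ (hβn n)).symm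
  clear_value t
  -- finitely many intermediate fields; pigeonhole
  have hfin : Finite (IntermediateField ℚ K) :=
    Field.finite_intermediateField_of_exists_primitive_element ℚ K ⟨α, hα⟩
  obtain ⟨n, m, hnm, hfe⟩ :=
    Finite.exists_ne_map_eq_of_infinite (fun n : ℚ => IntermediateField.adjoin ℚ {t n})
  set L := IntermediateField.adjoin ℚ {t n} with hL
  have htnL : t n ∈ L := IntermediateField.mem_adjoin_simple_self ℚ (t n)
  have htmL : t m ∈ L := by
    have h' : t m ∈ IntermediateField.adjoin ℚ {t m} :=
      IntermediateField.mem_adjoin_simple_self ℚ (t m)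
    have hfe' : L = IntermediateField.adjoin ℚ {t m} := hfe
    rw [← hfe'] at h'
    exact h'
  have h1 : α + (n : K) = t n * (ι α + n) := heq n
  have h2 : α + (m : K) = t m * (ι α + m) := heq m
  have hQmem : ∀ q : ℚ, ((q : K)) ∈ L := by
    intro q
    rw [show ((q : K)) = algebraMap ℚ K q from (eq_ratCast _ q).symm]
    exact L.algebraMap_mem q
  have hnmK : (n : K) ≠ (m : K) := fun h => hnm (Rat.cast_injective h)
  by_cases tc : t n = t m
  · -- then `t n = 1` and `α = ι α`, contradiction
    have h3 : (t n - 1) * ((n : K) - m) = 0 := by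
      linear_combination h2 - h1 - (ι α + (m : K)) * tc
    rcases mul_eq_zero.mp h3 with h | h
    · have ht1 : t n = 1 := by linear_combination h
      exact hαfix (by linear_combination -h1 - (ι α + (n : K)) * ht1)
    · exact sub_ne_zero.mpr hnmK h
  · -- then `ι α ∈ L`, hence `α ∈ L`, hence `L = ⊤`
    have hkey : ι α * (t n - t m) = (n : K) - m - t n * n + t m * m := by
      linear_combination h2 - h1
    have hβL : ι α ∈ L := by
      have hβeq : ι α = ((n : K) - m - t n * n + t m * m) / (t n - t m) :=
        (eq_div_iff (sub_ne_zero.mpr tc)).mpr hkey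
      rw [hβeq]
      exact L.div_mem
        (L.add_mem (L.sub_mem (L.sub_mem (hQmem n) (hQmem m)) (L.mul_mem htnL (hQmem n)))
          (L.mul_mem htmL (hQmem m)))
        (L.sub_mem htnL htmL)
    have hαL : α ∈ L := by
      have hrepr : α = t n * (ι α + n) - n := by linear_combination h1
      rw [hrepr]
      exact L.sub_mem (L.mul_mem htnL (L.add_mem hβL (hQmem n))) (hQmem n)
    have hLtop : L = ⊤ := by
      apply top_unique
      rw [← hα]
      exact IntermediateField.adjoin_le_iff.mpr (by simpa using hαL)
    have htop : Algebra.adjoin ℚ {t n} = ⊤ := by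
      rw [← IntermediateField.adjoin_simple_toSubalgebra_of_isAlgebraic (hint (t n)).isAlgebraic, ← hL, hLtop,
        IntermediateField.top_toSubalgebra]
    exact hcon (t n) htop (htι n)
end
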